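/- Let φ : 𝕋 → 𝕋 be a continuous map such that for every f ∈ A(𝕋) the composition f∘φ belongs to U(𝕋). Then sup_{n∈ℤ} ‖e^{inφ}‖_{U(𝕋)} < ∞. -/

import Mathlib

open MeasureTheory Filter

/-- The `k`-th Fourier coefficient of a function on the circle, identified with a
`2π`-periodic function on `ℝ`: `f̂(k) = (1/2π) ∫_{-π}^{π} f(t) e^{-ikt} dt`. -/
noncomputable def fourierCoef (f : ℝ → ℂ) (k : ℤ) : ℂ :=
  (1 / (2 * Real.pi)) * ∫ t in (-Real.pi)..Real.pi, f t * Complex.exp (-(k : ℂ) * Complex.I * t)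

/-- The `N`-th partial sum of the Fourier series: `S_N(f)(t) = ∑_{|k| ≤ N} f̂(k) e^{ikt}`. -/
noncomputable def partialFourierSum (f : ℝ → ℂ) (N : ℕ) (t : ℝ) : ℂ :=
  ∑ k ∈ Finset.Icc (-(N : ℤ)) (N : ℤ), fourierCoef f k * Complex.exp ((k : ℂ) * Complex.I * t)

/-- The norm of the space `U(𝕋)`: `‖f‖_U = sup_N ‖S_N(f)‖_{C(𝕋)}`. -/
noncomputable def uNorm (f : ℝ → ℂ) : ℝ :=
  ⨆ N : ℕ, ⨆ t : ℝ, ‖partialFourierSum f N t‖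

section Aux

lemma integral_exp_int (m : ℤ) :
    (∫ t in (-Real.pi)..Real.pi, Complex.exp ((m : ℂ) * Complex.I * (t : ℝ))) =
      if m = 0 then (2 * Real.pi : ℂ) else 0 := by
  rcases eq_or_ne m 0 with h | h
  · simp [h]
    ring
  · rw [if_neg h]
    have hc : (m : ℂ) * Complex.I ≠ 0 := by
      simp [Complex.I_ne_zero, Complex.ext_iff]
      exact_mod_cast h
    rw [integral_exp_mul_complex hc]
    have h1 : (m : ℂ) * Complex.I * (Real.pi : ℂ) =
        (m:ℂ) * Complex.I * ((-Real.pi : ℝ) : ℂ) + (m : ℂ) * (2 * Real.pi * Complex.I) := by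
      push_cast; ring
    rw [div_eq_zero_iff]
    left
    rw [h1, Complex.exp_add, Complex.exp_int_mul_two_pi_mul_I, mul_one, sub_self]

lemma norm_exp_I_int (k : ℤ) (x : ℝ) : ‖Complex.exp (Complex.I * (k : ℂ) * (x : ℝ))‖ = 1 := by
  simp [Complex.norm_exp]

lemma norm_exp_int_I (k : ℤ) (x : ℝ) : ‖Complex.exp ((k : ℂ) * Complex.I * (x : ℝ))‖ = 1 := by
  simp [Complex.norm_exp]

lemma norm_exp_neg_int_I (k : ℤ) (x : ℝ) : ‖Complex.exp (-(k : ℂ) * Complex.I * (x : ℝ))‖ = 1 := by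
  simp [Complex.norm_exp]

/-- ℓ¹(ℤ) -/
noncomputable abbrev ellOne := lp (fun _ : ℤ => ℂ) 1

lemma summable_norm_coe (a : ellOne) : Summable (fun k : ℤ => ‖a k‖) := by
  have h := (lp.memℓp a).summable (p := 1) (by norm_num)
  simpa using h

lemma ellOne_norm_eq (a : ellOne) : ‖a‖ = ∑' k : ℤ, ‖a k‖ := by
  have h := lp.norm_eq_tsum_rpow (p := 1) (by norm_num) a
  simpa using h

noncomputable def Fa (a : ellOne) (x : ℝ) : ℂ :=
  ∑' k : ℤ, a k * Complex.exp (Complex.I * (k : ℂ) * (x : ℝ))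

lemma Fa_summable (a : ellOne) (x : ℝ) :
    Summable (fun k : ℤ => a k * Complex.exp (Complex.I * (k : ℂ) * (x : ℝ))) := by
  apply Summable.of_norm
  simp only [norm_mul, norm_exp_I_int, mul_one]
  exact summable_norm_coe a

lemma Fa_norm_le (a : ellOne) (x : ℝ) : ‖Fa a x‖ ≤ ‖a‖ := by
  rw [Fa, ellOne_norm_eq]
  refine (norm_tsum_le_tsum_norm ?_).trans_eq ?_
  · simp only [norm_mul, norm_exp_I_int, mul_one]; exact summable_norm_coe a
  · simp only [norm_mul, norm_exp_I_int, mul_one]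

lemma Fa_continuous (a : ellOne) : Continuous (Fa a) := by
  apply continuous_tsum (u := fun k : ℤ => ‖a k‖)
  · intro k
    fun_prop
  · exact summable_norm_coe a
  · intro k x
    rw [norm_mul, norm_exp_I_int, mul_one]

lemma Fa_periodic (a : ellOne) : Function.Periodic (Fa a) (2 * Real.pi) := by
  intro x
  unfold Fa
  congr 1
  funext k
  congr 1
  have : ((x + 2 * Real.pi : ℝ) : ℂ) = (x : ℂ) + 2 * (Real.pi : ℂ) := by push_cast; ring
  rw [this, mul_add, Complex.exp_add]
  have h2 : Complex.I * (k : ℂ) * (2 * (Real.pi:ℂ)) = (k : ℂ) * (2 * (Real.pi:ℂ) * Complex.I) := by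
    ring
  rw [h2, Complex.exp_int_mul_two_pi_mul_I, mul_one]

lemma Fa_add (a b : ellOne) (x : ℝ) : Fa (a + b) x = Fa a x + Fa b x := by
  unfold Fa
  rw [← Summable.tsum_add (Fa_summable a x) (Fa_summable b x)]
  congr 1
  funext k
  rw [lp.coeFn_add, Pi.add_apply, add_mul]

lemma Fa_smul (c : ℂ) (a : ellOne) (x : ℝ) : Fa (c • a) x = c * Fa a x := by
  unfold Fa
  rw [← tsum_mul_left]
  congr 1
  funext k
  rw [lp.coeFn_smul, Pi.smul_apply, smul_eq_mul, mul_assoc]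

lemma fourierCoef_Fa (a : ellOne) (n : ℤ) : fourierCoef (Fa a) n = a n := by
  have hle : -Real.pi ≤ Real.pi := by linarith [Real.pi_pos]
  have hpi : (Real.pi : ℝ) ≠ 0 := Real.pi_ne_zero
  have key : ∀ t : ℝ, Fa a t * Complex.exp (-(n:ℂ) * Complex.I * (t:ℝ))
      = ∑' k : ℤ, a k * Complex.exp (((k - n : ℤ) : ℂ) * Complex.I * (t:ℝ)) := by
    intro t
    rw [Fa, ← tsum_mul_right]
    congr 1
    funext k
    rw [mul_assoc, ← Complex.exp_add]
    congr 2
    push_cast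
    ring
  unfold fourierCoef
  rw [intervalIntegral.integral_of_le hle]
  rw [MeasureTheory.integral_congr_ae (Eventually.of_forall (fun t => key t))]
  rw [← MeasureTheory.integral_tsum_of_summable_integral_norm]
  · have hval : ∀ k : ℤ, (∫ t in Set.Ioc (-Real.pi) Real.pi,
        a k * Complex.exp (((k - n : ℤ) : ℂ) * Complex.I * (t:ℝ)))
          = a k * (if k - n = 0 then (2 * Real.pi : ℂ) else 0) := by
      intro k
      rw [← intervalIntegral.integral_of_le hle, intervalIntegral.integral_const_mul,
        integral_exp_int]
    simp_rw [hval]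
    rw [tsum_eq_single n]
    · simp only [sub_self, if_pos rfl, if_true]
      have : (2 * (Real.pi:ℂ)) ≠ 0 := by
        simp [Complex.ext_iff, hpi]
      field_simp
    · intro k hk
      rw [if_neg (by omega), mul_zero]
  · intro k
    apply Continuous.integrableOn_Ioc
    fun_prop
  · have : ∀ k : ℤ, (∫ t in Set.Ioc (-Real.pi) Real.pi,
        ‖a k * Complex.exp (((k - n : ℤ) : ℂ) * Complex.I * (t:ℝ))‖)
          = ‖a k‖ * (2 * Real.pi) := by
      intro k
      simp only [norm_mul, norm_exp_int_I, mul_one]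
      rw [MeasureTheory.setIntegral_const, Real.volume_real_Ioc_of_le (by linarith [Real.pi_pos]),
        smul_eq_mul]
      ring
    simp_rw [this]
    exact (summable_norm_coe a).mul_right _

lemma Fa_single (n : ℤ) (x : ℝ) :
    Fa (lp.single 1 n (1:ℂ)) x = Complex.exp (Complex.I * (n:ℂ) * (x:ℝ)) := by
  unfold Fa
  rw [tsum_eq_single n]
  · rw [lp.single_apply_self, one_mul]
  · intro k hk
    rw [lp.single_apply_ne _ _ _ hk, zero_mul]

lemma norm_single_one (n : ℤ) : ‖(lp.single 1 n (1:ℂ) : ellOne)‖ = 1 := by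
  have := lp.norm_single (E := fun _ : ℤ => ℂ) (p := 1) (by norm_num) n (1:ℂ)
  simpa using this

lemma norm_fourierCoef_le {g : ℝ → ℂ} {C : ℝ} (h : ∀ t, ‖g t‖ ≤ C) (k : ℤ) :
    ‖fourierCoef g k‖ ≤ C := by
  have hpi := Real.pi_pos
  unfold fourierCoef
  rw [norm_mul]
  have h1 : ‖(1 / (2 * (Real.pi:ℂ)))‖ = 1 / (2 * Real.pi) := by
    simp [abs_of_pos Real.pi_pos]
  rw [h1]
  have h2 : ‖∫ t in (-Real.pi)..Real.pi, g t * Complex.exp (-(k : ℂ) * Complex.I * t)‖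
      ≤ C * |Real.pi - (-Real.pi)| := by
    apply intervalIntegral.norm_integral_le_of_norm_le_const
    intro x _
    rw [norm_mul, norm_exp_neg_int_I, mul_one]
    exact h x
  have h3 : |Real.pi - (-Real.pi)| = 2 * Real.pi := by
    rw [abs_of_pos] <;> linarith
  rw [h3] at h2
  calc 1 / (2 * Real.pi) * ‖_‖ ≤ 1 / (2 * Real.pi) * (C * (2 * Real.pi)) := by
        apply mul_le_mul_of_nonneg_left h2
        positivity
    _ = C := by field_simp

lemma fourierCoef_add {u v : ℝ → ℂ} (hu : Continuous u) (hv : Continuous v) (k : ℤ) :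
    fourierCoef (fun t => u t + v t) k = fourierCoef u k + fourierCoef v k := by
  unfold fourierCoef
  rw [← mul_add, ← intervalIntegral.integral_add
    ((by fun_prop : Continuous (fun t : ℝ => u t * Complex.exp (-(k : ℂ) * Complex.I * t))).intervalIntegrable _ _)
    ((by fun_prop : Continuous (fun t : ℝ => v t * Complex.exp (-(k : ℂ) * Complex.I * t))).intervalIntegrable _ _)]
  congr 1
  apply intervalIntegral.integral_congr
  intro t _
  ring

lemma fourierCoef_smul (u : ℝ → ℂ) (c : ℂ) (k : ℤ) :
    fourierCoef (fun t => c * u t) k = c * fourierCoef u k := by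
  unfold fourierCoef
  simp_rw [mul_assoc, intervalIntegral.integral_const_mul]
  ring

lemma pfs_add {u v : ℝ → ℂ} (hu : Continuous u) (hv : Continuous v) (N : ℕ) (t : ℝ) :
    partialFourierSum (fun s => u s + v s) N t
      = partialFourierSum u N t + partialFourierSum v N t := by
  unfold partialFourierSum
  rw [← Finset.sum_add_distrib]
  refine Finset.sum_congr rfl fun k _ => ?_
  rw [fourierCoef_add hu hv, add_mul]

lemma pfs_smul (u : ℝ → ℂ) (c : ℂ) (N : ℕ) (t : ℝ) :
    partialFourierSum (fun s => c * u s) N t = c * partialFourierSum u N t := by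
  unfold partialFourierSum
  rw [Finset.mul_sum]
  refine Finset.sum_congr rfl fun k _ => ?_
  rw [fourierCoef_smul, mul_assoc]

lemma pfs_norm_le {g : ℝ → ℂ} {C : ℝ} (h : ∀ s, ‖g s‖ ≤ C) (N : ℕ) (t : ℝ) :
    ‖partialFourierSum g N t‖ ≤ ((Finset.Icc (-(N:ℤ)) (N:ℤ)).card : ℝ) * C := by
  unfold partialFourierSum
  refine (norm_sum_le _ _).trans ?_
  have hb : ∀ k ∈ Finset.Icc (-(N:ℤ)) (N:ℤ),
      ‖fourierCoef g k * Complex.exp ((k : ℂ) * Complex.I * t)‖ ≤ C := by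
    intro k _
    rw [norm_mul, norm_exp_int_I, mul_one]
    exact norm_fourierCoef_le h k
  calc ∑ k ∈ Finset.Icc (-(N:ℤ)) (N:ℤ), ‖fourierCoef g k * Complex.exp ((k : ℂ) * Complex.I * t)‖
      ≤ ∑ _k ∈ Finset.Icc (-(N:ℤ)) (N:ℤ), C := Finset.sum_le_sum hb
    _ = ((Finset.Icc (-(N:ℤ)) (N:ℤ)).card : ℝ) * C := by rw [Finset.sum_const, nsmul_eq_mul]

end Aux

theorem superposition_implies_bounded_uNorm (φ : ℝ → ℝ) (hcont : Continuous φ)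
    (hper : ∀ t : ℝ, ∃ k : ℤ, φ (t + 2 * Real.pi) = φ t + 2 * Real.pi * k)
    (hsup : ∀ f : ℝ → ℂ, Continuous f → Function.Periodic f (2 * Real.pi) →
      Summable (fun k : ℤ => ‖fourierCoef f k‖) →
      TendstoUniformly (fun N t => partialFourierSum (f ∘ φ) N t) (f ∘ φ) atTop) :
    ∃ C : ℝ, ∀ n : ℤ, uNorm (fun t => Complex.exp (Complex.I * (n : ℂ) * (φ t))) ≤ C := by
  classical
  have hGc : ∀ a : ellOne, Continuous fun t => Fa a (φ t) :=
    fun a => (Fa_continuous a).comp hcont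
  have hGb : ∀ (a : ellOne) (t : ℝ), ‖Fa a (φ t)‖ ≤ ‖a‖ := fun a t => Fa_norm_le a (φ t)
  -- the family of continuous linear functionals
  let L : ℕ × ℝ → ellOne →L[ℂ] ℂ := fun p =>
    LinearMap.mkContinuous
      { toFun := fun a => partialFourierSum (fun s => Fa a (φ s)) p.1 p.2
        map_add' := by
          intro a b
          have he : (fun s => Fa (a + b) (φ s)) = fun s => Fa a (φ s) + Fa b (φ s) :=
            funext fun s => Fa_add a b (φ s)
          show partialFourierSum (fun s => Fa (a + b) (φ s)) p.1 p.2
            = partialFourierSum (fun s => Fa a (φ s)) p.1 p.2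
              + partialFourierSum (fun s => Fa b (φ s)) p.1 p.2
          rw [he, pfs_add (hGc a) (hGc b)]
        map_smul' := by
          intro c a
          have he : (fun s => Fa (c • a) (φ s)) = fun s => c * Fa a (φ s) :=
            funext fun s => Fa_smul c a (φ s)
          show partialFourierSum (fun s => Fa (c • a) (φ s)) p.1 p.2
            = (RingHom.id ℂ) c • partialFourierSum (fun s => Fa a (φ s)) p.1 p.2
          rw [he, pfs_smul]
          rfl }
      ((Finset.Icc (-(p.1:ℤ)) (p.1:ℤ)).card : ℝ)
      (by
        intro a
        exact pfs_norm_le (hGb a) p.1 p.2)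
  have hLapp : ∀ (p : ℕ × ℝ) (a : ellOne),
      L p a = partialFourierSum (fun s => Fa a (φ s)) p.1 p.2 := fun p a => rfl
  -- pointwise boundedness
  have hpt : ∀ a : ellOne, ∃ C : ℝ, ∀ p : ℕ × ℝ, ‖L p a‖ ≤ C := by
    intro a
    have hsummable : Summable (fun k : ℤ => ‖fourierCoef (Fa a) k‖) := by
      simp_rw [fourierCoef_Fa]
      exact summable_norm_coe a
    have h := hsup (Fa a) (Fa_continuous a) (Fa_periodic a) hsummable
    rw [Metric.tendstoUniformly_iff] at h
    obtain ⟨N₀, hN₀⟩ := eventually_atTop.mp (h 1 one_pos)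
    refine ⟨max (((Finset.Icc (-(N₀:ℤ)) (N₀:ℤ)).card : ℝ) * ‖a‖) (‖a‖ + 1), ?_⟩
    rintro ⟨N, t⟩
    rcases le_or_gt N₀ N with hN | hN
    · refine le_trans ?_ (le_max_right _ _)
      have hd := hN₀ N hN t
      rw [hLapp]
      have : partialFourierSum (fun s => Fa a (φ s)) N t
          = partialFourierSum ((Fa a) ∘ φ) N t := rfl
      rw [this]
      calc ‖partialFourierSum ((Fa a) ∘ φ) N t‖
          ≤ ‖((Fa a) ∘ φ) t‖ + ‖partialFourierSum ((Fa a) ∘ φ) N t - ((Fa a) ∘ φ) t‖ :=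
            norm_le_insert' _ _
        _ ≤ ‖a‖ + 1 := by
            apply add_le_add (hGb a t)
            rw [← dist_eq_norm]
            exact le_of_lt (by rw [dist_comm]; exact hd)
    · refine le_trans ?_ (le_max_left _ _)
      rw [hLapp]
      refine (pfs_norm_le (hGb a) N t).trans ?_
      apply mul_le_mul_of_nonneg_right _ (norm_nonneg a)
      have hNN : (N : ℤ) ≤ (N₀ : ℤ) := by exact_mod_cast hN.le
      exact Nat.cast_le.mpr (Finset.card_le_card (Finset.Icc_subset_Icc (neg_le_neg hNN) hNN))
  obtain ⟨C', hC'⟩ := banach_steinhaus hpt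
  refine ⟨max C' 0, ?_⟩
  intro n
  have hkey : ∀ (N : ℕ) (t : ℝ),
      ‖partialFourierSum (fun s => Complex.exp (Complex.I * (n : ℂ) * (φ s))) N t‖ ≤ max C' 0 := by
    intro N t
    have he : (fun s => Complex.exp (Complex.I * (n : ℂ) * ((φ s : ℝ) : ℂ)))
        = fun s => Fa (lp.single 1 n (1:ℂ)) (φ s) := funext fun s => (Fa_single n (φ s)).symm
    rw [he, ← hLapp (N, t)]
    calc ‖L (N, t) (lp.single 1 n 1)‖ ≤ ‖L (N, t)‖ * ‖(lp.single 1 n (1:ℂ) : ellOne)‖ :=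
          (L (N, t)).le_opNorm _
      _ = ‖L (N, t)‖ := by rw [norm_single_one, mul_one]
      _ ≤ C' := hC' (N, t)
      _ ≤ max C' 0 := le_max_left _ _
  unfold uNorm
  refine Real.iSup_le (fun N => Real.iSup_le (fun t => hkey N t) (le_max_right _ _))
    (le_max_right _ _)
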